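/- arXiv:2310.20571 — 2 statements merged into one kernel-verified Lean document; each statement's English description precedes it below -/
import Mathlib

section
/- Let C be an equivalence class of left weak Bruhat intervals in S_n under descent-preserving isomorphism. Then the element ξ_C := ρσ⁻¹ is the same for every interval [σ, ρ]_L ∈ C. -/
/-- The left inversion set `Inv_L(σ) = {(i,j) : i < j, σ(i) > σ(j)}`. -/
def InvL {n : ℕ} (σ : Equiv.Perm (Fin n)) : Set (Fin n × Fin n) :=
  {p | p.1 < p.2 ∧ σ p.2 < σ p.1}

/-- The left weak Bruhat order: `σ ≤_L ρ` iff `Inv_L(σ) ⊆ Inv_L(ρ)`. -/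
def lLE {n : ℕ} (σ ρ : Equiv.Perm (Fin n)) : Prop := InvL σ ⊆ InvL ρ

/-- The right inversion set `Inv_R(σ) = {(σ(i),σ(j)) : i < j, σ(i) > σ(j)}`. -/
def InvR {n : ℕ} (σ : Equiv.Perm (Fin n)) : Set (Fin n × Fin n) :=
  {p | p.2 < p.1 ∧ σ⁻¹ p.1 < σ⁻¹ p.2}

/-- The right weak Bruhat order: `σ ≤_R ρ` iff `Inv_R(σ) ⊆ Inv_R(ρ)`. -/
def rLE {n : ℕ} (σ ρ : Equiv.Perm (Fin n)) : Prop := InvR σ ⊆ InvR ρ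

/-- The left weak Bruhat interval `[σ, ρ]_L`. -/
def lInterval {n : ℕ} (σ ρ : Equiv.Perm (Fin n)) : Set (Equiv.Perm (Fin n)) :=
  {γ | lLE σ γ ∧ lLE γ ρ}

/-- The right weak Bruhat interval `[σ, ρ]_R`. -/
def rInterval {n : ℕ} (σ ρ : Equiv.Perm (Fin n)) : Set (Equiv.Perm (Fin n)) :=
  {γ | rLE σ γ ∧ rLE γ ρ}

/-- The Coxeter length of a permutation, i.e. its number of inversions. -/
def len {n : ℕ} (σ : Equiv.Perm (Fin n)) : ℕ :=
  (Finset.univ.filter fun p : Fin n × Fin n => p.1 < p.2 ∧ σ p.2 < σ p.1).card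

/-- The simple transposition `s_i` (swapping the adjacent values `i`, `i+1`). -/
def sgen {n : ℕ} (i : Fin n) : Equiv.Perm (Fin (n + 1)) :=
  Equiv.swap i.castSucc i.succ

/-- The left descent set `Des_L(σ) = {i : ℓ(s_i σ) < ℓ(σ)}`. -/
def DesL {n : ℕ} (σ : Equiv.Perm (Fin (n + 1))) : Set (Fin n) :=
  {i | len (sgen i * σ) < len σ}

-- basics
theorem Equiv.Perm.apply_inv_self {α : Type*} (f : Equiv.Perm α) (x : α) : f (f⁻¹ x) = x :=
  f.apply_symm_apply x

theorem Equiv.Perm.inv_apply_self {α : Type*} (f : Equiv.Perm α) (x : α) : f⁻¹ (f x) = x :=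
  f.symm_apply_apply x

lemma mem_InvL {n : ℕ} {σ : Equiv.Perm (Fin n)} {p : Fin n × Fin n} :
    p ∈ InvL σ ↔ p.1 < p.2 ∧ σ p.2 < σ p.1 := Iff.rfl

def FInvL {n : ℕ} (σ : Equiv.Perm (Fin n)) : Finset (Fin n × Fin n) :=
  Finset.univ.filter fun p : Fin n × Fin n => p.1 < p.2 ∧ σ p.2 < σ p.1

lemma coe_FInvL {n : ℕ} (σ : Equiv.Perm (Fin n)) : (FInvL σ : Set (Fin n × Fin n)) = InvL σ := by
  ext p; simp [FInvL, InvL]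

lemma mem_FInvL {n : ℕ} {σ : Equiv.Perm (Fin n)} {p : Fin n × Fin n} :
    p ∈ FInvL σ ↔ p ∈ InvL σ := by
  rw [← coe_FInvL]; simp

lemma len_eq_card {n : ℕ} (σ : Equiv.Perm (Fin n)) : len σ = (FInvL σ).card := rfl

lemma lLE_iff {n : ℕ} {σ ρ : Equiv.Perm (Fin n)} : lLE σ ρ ↔ FInvL σ ⊆ FInvL ρ := by
  constructor
  · intro h p hp; rw [mem_FInvL] at *; exact h hp
  · intro h p hp; rw [← mem_FInvL] at hp ⊢; exact h hp

lemma lLE_refl {n : ℕ} (σ : Equiv.Perm (Fin n)) : lLE σ σ := subset_rfl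

lemma len_le_of_lLE {n : ℕ} {σ ρ : Equiv.Perm (Fin n)} (h : lLE σ ρ) : len σ ≤ len ρ :=
  Finset.card_le_card (lLE_iff.mp h)

-- the adjacent swap comparison lemma
lemma swap_adj_lt {m : ℕ} {c d : Fin m} (h : (c : ℕ) + 1 = (d : ℕ)) {u v : Fin m}
    (h1 : ¬(u = c ∧ v = d)) (h2 : ¬(u = d ∧ v = c)) :
    (Equiv.swap c d u < Equiv.swap c d v ↔ u < v) := by
  simp only [Equiv.swap_apply_def]
  simp only [Fin.ext_iff, not_and] at h1 h2
  split_ifs <;> simp only [Fin.ext_iff, Fin.lt_def] at * <;> omega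

-- L3: inversion set after left multiplication by an adjacent transposition (ascent case)
lemma InvL_sgen_mul {n : ℕ} (x : Equiv.Perm (Fin (n + 1))) (j : Fin n)
    (h : x⁻¹ j.castSucc < x⁻¹ j.succ) :
    InvL (sgen j * x) = insert (x⁻¹ j.castSucc, x⁻¹ j.succ) (InvL x) ∧
      (x⁻¹ j.castSucc, x⁻¹ j.succ) ∉ InvL x := by
  set c := j.castSucc with hc
  set d := j.succ with hd
  have hcd : (c : ℕ) + 1 = (d : ℕ) := by simp [hc, hd]
  set a := x⁻¹ c with ha
  set b := x⁻¹ d with hb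
  have hxa : x a = c := x.apply_inv_self c
  have hxb : x b = d := x.apply_inv_self d
  have hnotin : (a, b) ∉ InvL x := by
    intro hmem
    rcases hmem with ⟨-, h2⟩
    simp only [hxa, hxb] at h2
    exact absurd hcd (by omega)
  refine ⟨?_, hnotin⟩
  ext ⟨p, q⟩
  by_cases hpq : (p, q) = (a, b)
  · rcases Prod.mk.injEq .. ▸ hpq with ⟨rfl, rfl⟩
    have hL : (a, b) ∈ InvL (sgen j * x) := by
      refine ⟨h, ?_⟩
      show (Equiv.swap c d) (x b) < (Equiv.swap c d) (x a)
      rw [hxa, hxb, Equiv.swap_apply_left, Equiv.swap_apply_right]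
      exact Fin.lt_def.mpr (by omega)
    simp [hL]
  · by_cases hswap : x q = c ∧ x p = d
    · have hq : q = a := by rw [ha, ← hswap.1, Equiv.Perm.inv_apply_self]
      have hp : p = b := by rw [hb, ← hswap.2, Equiv.Perm.inv_apply_self]
      subst hp; subst hq
      constructor
      · rintro ⟨h1', -⟩; exact absurd (lt_trans h1' h) (lt_irrefl _)
      · rintro (heq | ⟨h1', -⟩)
        · rcases Prod.mk.injEq .. ▸ heq with ⟨hba, -⟩
          rw [hba] at h; exact absurd h (lt_irrefl _)
        · exact absurd (lt_trans h1' h) (lt_irrefl _)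
    · have hne3 : ¬(x q = d ∧ x p = c) := by
        rintro ⟨h1, h2⟩
        have hq : q = b := by rw [hb, ← h1, Equiv.Perm.inv_apply_self]
        have hp : p = a := by rw [ha, ← h2, Equiv.Perm.inv_apply_self]
        exact hpq (by rw [hp, hq])
      have key : (sgen j * x) q < (sgen j * x) p ↔ x q < x p := by
        show (Equiv.swap c d) (x q) < (Equiv.swap c d) (x p) ↔ _
        exact swap_adj_lt hcd hswap hne3
      simp only [Set.mem_insert_iff, mem_InvL, hpq, false_or, key]

lemma len_sgen_mul {n : ℕ} (x : Equiv.Perm (Fin (n + 1))) (j : Fin n)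
    (h : x⁻¹ j.castSucc < x⁻¹ j.succ) :
    len (sgen j * x) = len x + 1 := by
  obtain ⟨hins, hnot⟩ := InvL_sgen_mul x j h
  have hF : FInvL (sgen j * x) = insert (x⁻¹ j.castSucc, x⁻¹ j.succ) (FInvL x) := by
    apply Finset.coe_injective
    rw [coe_FInvL, Finset.coe_insert, coe_FInvL, hins]
  rw [len_eq_card, hF, Finset.card_insert_of_notMem (by rw [mem_FInvL]; exact hnot),
    len_eq_card]

lemma sgen_mul_sgen_mul {n : ℕ} (j : Fin n) (x : Equiv.Perm (Fin (n + 1))) :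
    sgen j * (sgen j * x) = x := by
  rw [← mul_assoc, sgen, Equiv.swap_mul_self, one_mul]

-- L5 : descent characterization
lemma mem_DesL_iff {n : ℕ} {w : Equiv.Perm (Fin (n + 1))} {i : Fin n} :
    i ∈ DesL w ↔ w⁻¹ i.succ < w⁻¹ i.castSucc := by
  have hne : w⁻¹ i.castSucc ≠ w⁻¹ i.succ := by
    intro hcontra
    have := w⁻¹.injective hcontra
    exact absurd (congrArg Fin.val this) (by simp)
  rcases lt_or_gt_of_ne hne with hlt | hgt
  · have := len_sgen_mul w i hlt
    constructor
    · intro hd; exact absurd (show len (sgen i * w) < len w from hd) (by omega)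
    · intro hd; exact absurd (lt_trans hd hlt) (lt_irrefl _)
  · have hkey : (sgen i * w)⁻¹ i.castSucc < (sgen i * w)⁻¹ i.succ := by
      have h1 : (sgen i * w)⁻¹ i.castSucc = w⁻¹ i.succ := by
        rw [mul_inv_rev]
        show w⁻¹ ((sgen i)⁻¹ i.castSucc) = _
        rw [sgen, Equiv.swap_inv, Equiv.swap_apply_left]
      have h2 : (sgen i * w)⁻¹ i.succ = w⁻¹ i.castSucc := by
        rw [mul_inv_rev]
        show w⁻¹ ((sgen i)⁻¹ i.succ) = _
        rw [sgen, Equiv.swap_inv, Equiv.swap_apply_right]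
      rw [h1, h2]; exact hgt
    have := len_sgen_mul (sgen i * w) i hkey
    rw [sgen_mul_sgen_mul] at this
    constructor
    · intro _; exact hgt
    · intro _; show len (sgen i * w) < len w; omega

-- injectivity of InvL
lemma card_filter_lt {m : ℕ} (t : Fin m) :
    (Finset.univ.filter fun q => q < t).card = (t : ℕ) := by
  have : (Finset.univ.filter fun q => q < t) = Finset.Iio t := by
    ext q; simp
  rw [this, Fin.card_Iio]

lemma card_filter_apply_lt {m : ℕ} (x : Equiv.Perm (Fin m)) (p : Fin m) :
    (Finset.univ.filter fun q => x q < x p).card = ((x p : ℕ)) := by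
  rw [← card_filter_lt (x p)]
  apply Finset.card_bij (fun q _ => x q)
  · intro q hq; simp only [Finset.mem_filter, Finset.mem_univ, true_and] at *; exact hq
  · intro q1 h1 q2 h2 he; exact x.injective he
  · intro v hv
    refine ⟨x⁻¹ v, ?_, by simp⟩
    simp only [Finset.mem_filter, Finset.mem_univ, true_and] at *
    rwa [x.apply_inv_self]

lemma perm_count_eq {m : ℕ} (x : Equiv.Perm (Fin m)) (p : Fin m) :
    ((x p : ℕ)) + (Finset.univ.filter fun q => q < p ∧ x p < x q).card
      = (p : ℕ) + (Finset.univ.filter fun q => p < q ∧ x q < x p).card := by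
  classical
  have e1 : (Finset.univ.filter fun q => x q < x p)
      = (Finset.univ.filter fun q => q < p ∧ x q < x p)
        ∪ (Finset.univ.filter fun q => p < q ∧ x q < x p) := by
    ext q
    simp only [Finset.mem_filter, Finset.mem_univ, true_and, Finset.mem_union]
    constructor
    · intro h
      rcases lt_trichotomy q p with h' | rfl | h'
      · exact Or.inl ⟨h', h⟩
      · exact absurd h (lt_irrefl _)
      · exact Or.inr ⟨h', h⟩
    · rintro (⟨-, h⟩ | ⟨-, h⟩) <;> exact h
  have e2 : (Finset.univ.filter fun q => q < p)
      = (Finset.univ.filter fun q => q < p ∧ x q < x p)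
        ∪ (Finset.univ.filter fun q => q < p ∧ x p < x q) := by
    ext q
    simp only [Finset.mem_filter, Finset.mem_univ, true_and, Finset.mem_union]
    constructor
    · intro h
      rcases lt_trichotomy (x q) (x p) with h' | he | h'
      · exact Or.inl ⟨h, h'⟩
      · exact absurd (x.injective he) (ne_of_lt h)
      · exact Or.inr ⟨h, h'⟩
    · rintro (⟨h, -⟩ | ⟨h, -⟩) <;> exact h
  have d1 : Disjoint (Finset.univ.filter fun q => q < p ∧ x q < x p)
      (Finset.univ.filter fun q => p < q ∧ x q < x p) := by
    rw [Finset.disjoint_left]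
    intro q h1 h2
    simp only [Finset.mem_filter, Finset.mem_univ, true_and] at h1 h2
    exact absurd (lt_trans h1.1 h2.1) (lt_irrefl _)
  have d2 : Disjoint (Finset.univ.filter fun q => q < p ∧ x q < x p)
      (Finset.univ.filter fun q => q < p ∧ x p < x q) := by
    rw [Finset.disjoint_left]
    intro q h1 h2
    simp only [Finset.mem_filter, Finset.mem_univ, true_and] at h1 h2
    exact absurd (lt_trans h1.2 h2.2) (lt_irrefl _)
  have c1 := card_filter_apply_lt x p
  have c2 := card_filter_lt p
  rw [e1, Finset.card_union_of_disjoint d1] at c1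
  rw [e2, Finset.card_union_of_disjoint d2] at c2
  omega

lemma InvL_injective {m : ℕ} {x y : Equiv.Perm (Fin m)} (h : InvL x = InvL y) : x = y := by
  apply Equiv.ext
  intro p
  have hf1 : (Finset.univ.filter fun q => q < p ∧ x p < x q)
      = (Finset.univ.filter fun q => q < p ∧ y p < y q) := by
    ext q
    simp only [Finset.mem_filter, Finset.mem_univ, true_and]
    constructor
    · intro hq
      have : (q, p) ∈ InvL x := ⟨hq.1, hq.2⟩
      rw [h] at this
      exact ⟨this.1, this.2⟩
    · intro hq
      have : (q, p) ∈ InvL y := ⟨hq.1, hq.2⟩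
      rw [← h] at this
      exact ⟨this.1, this.2⟩
  have hf2 : (Finset.univ.filter fun q => p < q ∧ x q < x p)
      = (Finset.univ.filter fun q => p < q ∧ y q < y p) := by
    ext q
    simp only [Finset.mem_filter, Finset.mem_univ, true_and]
    constructor
    · intro hq
      have : (p, q) ∈ InvL x := ⟨hq.1, hq.2⟩
      rw [h] at this
      exact ⟨this.1, this.2⟩
    · intro hq
      have : (p, q) ∈ InvL y := ⟨hq.1, hq.2⟩
      rw [← h] at this
      exact ⟨this.1, this.2⟩
  have c1 := perm_count_eq x p
  have c2 := perm_count_eq y p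
  rw [hf1, hf2] at c1
  exact Fin.ext (by omega)

lemma lLE_antisymm {m : ℕ} {x y : Equiv.Perm (Fin m)} (h1 : lLE x y) (h2 : lLE y x) : x = y :=
  InvL_injective (Set.Subset.antisymm h1 h2)

-- existence of pairs adjacent in x-values (for going up) in `InvL y \ InvL x`
lemma exists_x_adj_pair {m : ℕ} (k : ℕ) (x y : Equiv.Perm (Fin m)) (hsub : InvL x ⊆ InvL y)
    (p q : Fin m) (hpq : p < q) (hyq : y q < y p) (hxq : x p < x q)
    (hk : ((x q : ℕ)) ≤ (x p : ℕ) + k) :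
    ∃ a b, a < b ∧ y b < y a ∧ x a < x b ∧ ((x a : ℕ)) + 1 = ((x b : ℕ)) := by
  induction k generalizing p q with
  | zero => exact absurd hk (by have := Fin.lt_def.mp hxq; omega)
  | succ k ih =>
    by_cases hadj : ((x q : ℕ)) = ((x p : ℕ)) + 1
    · exact ⟨p, q, hpq, hyq, hxq, by omega⟩
    · have hdiff : ((x p : ℕ)) + 2 ≤ ((x q : ℕ)) := by
        have := Fin.lt_def.mp hxq; omega
      have hk1 : 1 ≤ k := by omega
      have hvlt : ((x p : ℕ)) + 1 < m := by
        have := (x q).isLt; omega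
      obtain ⟨r, hxr⟩ : ∃ r, ((x r : ℕ)) = ((x p : ℕ)) + 1 :=
        ⟨x⁻¹ ⟨(x p : ℕ) + 1, hvlt⟩, by rw [x.apply_inv_self]⟩
      have hxrq : ((x r : ℕ)) < ((x q : ℕ)) := by omega
      have hrp : r ≠ p := fun he => by rw [he] at hxr; omega
      have hrq : r ≠ q := fun he => by rw [he] at hxr; omega
      rcases lt_or_gt_of_ne hrp with hlt | hgt
      · -- r < p : (r,p) ∈ InvL x hence InvL y, then recurse on (r,q)
        have hrpy : (r, p) ∈ InvL y := hsub ⟨hlt, show x p < x r from Fin.lt_def.mpr (by omega)⟩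
        have hypr : y p < y r := hrpy.2
        exact ih r q (lt_trans hlt hpq) (lt_trans hyq hypr) (Fin.lt_def.mpr (by omega)) (by omega)
      · -- p < r
        rcases lt_or_gt_of_ne (fun he : y r = y p => hrp (y.injective he)) with hyrp | hyrp
        · -- y r < y p : recurse on (p, r)
          exact ih p r hgt hyrp (Fin.lt_def.mpr (by omega)) (by omega)
        · -- y p < y r
          rcases lt_trichotomy r q with hlt2 | rfl | hgt2
          · -- r < q : recurse on (r, q)
            exact ih r q hlt2 (lt_trans hyq hyrp) (Fin.lt_def.mpr (by omega)) (by omega)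
          · exact absurd rfl hrq
          · -- q < r : contradiction
            have hqr : (q, r) ∈ InvL y := hsub ⟨hgt2, show x r < x q from Fin.lt_def.mpr (by omega)⟩
            have : y r < y q := hqr.2
            exact absurd (lt_trans hyq (lt_trans hyrp this)) (lt_irrefl _)

-- existence of pairs adjacent in y-values (for going down) in `InvL y \ InvL x`
lemma exists_y_adj_pair {m : ℕ} (k : ℕ) (x y : Equiv.Perm (Fin m)) (hsub : InvL x ⊆ InvL y)
    (p q : Fin m) (hpq : p < q) (hyq : y q < y p) (hxq : x p < x q)
    (hk : ((y p : ℕ)) ≤ (y q : ℕ) + k) :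
    ∃ a b, a < b ∧ y b < y a ∧ x a < x b ∧ ((y b : ℕ)) + 1 = ((y a : ℕ)) := by
  induction k generalizing p q with
  | zero => exact absurd hk (by have := Fin.lt_def.mp hyq; omega)
  | succ k ih =>
    by_cases hadj : ((y p : ℕ)) = ((y q : ℕ)) + 1
    · exact ⟨p, q, hpq, hyq, hxq, by omega⟩
    · have hdiff : ((y q : ℕ)) + 2 ≤ ((y p : ℕ)) := by
        have := Fin.lt_def.mp hyq; omega
      have hk1 : 1 ≤ k := by omega
      have hvlt : ((y q : ℕ)) + 1 < m := by
        have := (y p).isLt; omega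
      obtain ⟨r, hyr⟩ : ∃ r, ((y r : ℕ)) = ((y q : ℕ)) + 1 :=
        ⟨y⁻¹ ⟨(y q : ℕ) + 1, hvlt⟩, by rw [y.apply_inv_self]⟩
      have hrp : r ≠ p := fun he => by rw [he] at hyr; omega
      have hrq : r ≠ q := fun he => by rw [he] at hyr; omega
      rcases lt_trichotomy r q with hlt | heq | hgt
      · rcases lt_or_gt_of_ne hrp with hlt2 | hgt2
        · -- r < p (and r < q) : (r,q) works after showing x r < x q
          have hxrq : x r < x q := by
            rcases lt_or_gt_of_ne (fun he : x q = x r => hrq (x.injective he).symm) with h' | h'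
            · -- x q < x r : contradiction via (r,p) ∈ InvL x
              have hm : (r, p) ∈ InvL y := hsub ⟨hlt2, show x p < x r from lt_trans hxq h'⟩
              have : y p < y r := hm.2
              exact absurd (Fin.lt_def.mp this) (by omega)
            · exact h'
          exact ih r q hlt (Fin.lt_def.mpr (by omega)) hxrq (by omega)
        · -- p < r < q
          rcases lt_or_gt_of_ne (fun he : x r = x p => hrp (x.injective he)) with h' | h'
          · -- x r < x p : use (r, q)
            exact ih r q hlt (Fin.lt_def.mpr (by omega)) (lt_trans h' hxq) (by omega)
          · -- x p < x r : use (p, r)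
            exact ih p r hgt2 (Fin.lt_def.mpr (by omega)) h' (by omega)
      · exact absurd heq hrq
      · -- q < r : use (p, r) after showing x p < x r
        have hxpr : x p < x r := by
          rcases lt_or_gt_of_ne (fun he : x r = x p => hrp (x.injective he)) with h' | h'
          · -- x r < x p : contradiction via (q,r) ∈ InvL x
            have hm : (q, r) ∈ InvL y := hsub ⟨hgt, show x r < x q from lt_trans h' hxq⟩
            have : y r < y q := hm.2
            exact absurd (Fin.lt_def.mp this) (by omega)
          · exact h'
        exact ih p r (lt_trans hpq hgt) (Fin.lt_def.mpr (by omega)) hxpr (by omega)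

-- a pair in the difference of inversion sets
lemma exists_diff_pair {m : ℕ} {x y : Equiv.Perm (Fin m)} (h : lLE x y) (hne : x ≠ y) :
    ∃ p q : Fin m, p < q ∧ y q < y p ∧ x p < x q := by
  have hss : InvL x ⊂ InvL y := ⟨h, fun hsub => hne (InvL_injective (Set.Subset.antisymm h hsub))⟩
  obtain ⟨pq, hy, hx⟩ := Set.exists_of_ssubset hss
  obtain ⟨p, q⟩ := pq
  have hpq : p < q := hy.1
  have hyq : y q < y p := hy.2
  refine ⟨p, q, hpq, hyq, ?_⟩
  rcases lt_trichotomy (x p) (x q) with h' | he | h'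
  · exact h'
  · exact absurd (x.injective he) (ne_of_lt hpq)
  · exact absurd (show (p, q) ∈ InvL x from ⟨hpq, h'⟩) hx

-- going one step up from x towards y
lemma up_step {n : ℕ} {x y : Equiv.Perm (Fin (n + 1))} (h : lLE x y) (hne : x ≠ y) :
    ∃ j : Fin n, x⁻¹ j.castSucc < x⁻¹ j.succ ∧ lLE x (sgen j * x) ∧ lLE (sgen j * x) y ∧
      len (sgen j * x) = len x + 1 := by
  obtain ⟨p, q, hpq, hyq, hxq⟩ := exists_diff_pair h hne
  obtain ⟨a, b, hab, hyba, hxab, hadj⟩ :=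
    exists_x_adj_pair ((x q : ℕ)) x y h p q hpq hyq hxq (by omega)
  have hjlt : ((x a : ℕ)) < n := by have := (x b).isLt; omega
  set j : Fin n := ⟨(x a : ℕ), hjlt⟩ with hj
  have hca : j.castSucc = x a := Fin.ext (by simp [hj])
  have hcb : j.succ = x b := Fin.ext (by simp [hj, hadj])
  have hia : x⁻¹ j.castSucc = a := by rw [hca, Equiv.Perm.inv_apply_self]
  have hib : x⁻¹ j.succ = b := by rw [hcb, Equiv.Perm.inv_apply_self]
  have hasc : x⁻¹ j.castSucc < x⁻¹ j.succ := by rw [hia, hib]; exact hab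
  obtain ⟨hins, hnot⟩ := InvL_sgen_mul x j hasc
  rw [hia, hib] at hins
  refine ⟨j, hasc, ?_, ?_, len_sgen_mul x j hasc⟩
  · rw [lLE, hins]; exact Set.subset_insert _ _
  · rw [lLE, hins, Set.insert_subset_iff]
    exact ⟨⟨hab, hyba⟩, h⟩

-- going one step down from y towards x
lemma down_step {n : ℕ} {x y : Equiv.Perm (Fin (n + 1))} (h : lLE x y) (hne : x ≠ y) :
    ∃ j : Fin n, (sgen j * y)⁻¹ j.castSucc < (sgen j * y)⁻¹ j.succ ∧
      sgen j * (sgen j * y) = y ∧ lLE x (sgen j * y) ∧ lLE (sgen j * y) y ∧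
      len y = len (sgen j * y) + 1 := by
  obtain ⟨p, q, hpq, hyq, hxq⟩ := exists_diff_pair h hne
  obtain ⟨a, b, hab, hyba, hxab, hadj⟩ :=
    exists_y_adj_pair ((y p : ℕ)) x y h p q hpq hyq hxq (by omega)
  have hjlt : ((y b : ℕ)) < n := by have := (y a).isLt; omega
  set j : Fin n := ⟨(y b : ℕ), hjlt⟩ with hj
  have hca : j.castSucc = y b := Fin.ext (by simp [hj])
  have hcb : j.succ = y a := Fin.ext (by simp [hj, hadj])
  set w := sgen j * y with hw
  have hwy : sgen j * w = y := sgen_mul_sgen_mul j y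
  have hwinv : ∀ z, w⁻¹ z = y⁻¹ (sgen j z) := by
    intro z
    rw [hw, mul_inv_rev]
    show y⁻¹ ((sgen j)⁻¹ z) = _
    rw [sgen, Equiv.swap_inv]
  have hia : w⁻¹ j.castSucc = a := by
    rw [hwinv, sgen, Equiv.swap_apply_left, hcb, Equiv.Perm.inv_apply_self]
  have hib : w⁻¹ j.succ = b := by
    rw [hwinv, sgen, Equiv.swap_apply_right, hca, Equiv.Perm.inv_apply_self]
  have hasc : w⁻¹ j.castSucc < w⁻¹ j.succ := by rw [hia, hib]; exact hab
  obtain ⟨hins, hnot⟩ := InvL_sgen_mul w j hasc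
  rw [hia, hib, hwy] at hins
  have hlen := len_sgen_mul w j hasc
  rw [hwy] at hlen
  refine ⟨j, hasc, hwy, ?_, ?_, hlen⟩
  · intro z hz
    have hz' := h hz
    rw [hins, Set.mem_insert_iff] at hz'
    rcases hz' with rfl | hz'
    · exact absurd hz (fun hc => absurd hc.2 (not_lt.mpr (le_of_lt hxab)))
    · exact hz'
  · rw [lLE, hins]; exact Set.subset_insert _ _

-- the label of a cover is determined by the descent sets
lemma label_unique {n : ℕ} (w : Equiv.Perm (Fin (n + 1))) (j i : Fin n)
    (hasc : w⁻¹ j.castSucc < w⁻¹ j.succ)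
    (hi : i ∈ DesL (sgen j * w)) (hni : i ∉ DesL w) : i = j := by
  have hwinv : ∀ z, (sgen j * w)⁻¹ z = w⁻¹ (sgen j z) := by
    intro z
    rw [mul_inv_rev]
    show w⁻¹ ((sgen j)⁻¹ z) = _
    rw [sgen, Equiv.swap_inv]
  rw [mem_DesL_iff, hwinv, hwinv] at hi
  simp only [sgen] at hi
  rw [mem_DesL_iff, not_lt] at hni
  have hni' : w⁻¹ i.castSucc < w⁻¹ i.succ := by
    rcases lt_or_eq_of_le hni with h' | h'
    · exact h'
    · exact absurd (congrArg Fin.val (w⁻¹.injective h')) (by simp)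
  by_contra hij
  have hvij : (i : ℕ) ≠ (j : ℕ) := fun he => hij (Fin.ext he)
  rcases Nat.lt_trichotomy ((i : ℕ) + 1) (j : ℕ) with hc | hc | hc
  · -- i + 1 < j : sgen j fixes both
    rw [Equiv.swap_apply_of_ne_of_ne (by intro he; have := congrArg Fin.val he; simp at this; omega)
        (by intro he; have := congrArg Fin.val he; simp at this; omega),
      Equiv.swap_apply_of_ne_of_ne (by intro he; have := congrArg Fin.val he; simp at this; omega)
        (by intro he; have := congrArg Fin.val he; simp at this; omega)] at hi
    exact absurd hi (not_lt.mpr (le_of_lt hni'))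
  · -- i + 1 = j : i.succ = j.castSucc
    have he1 : i.succ = j.castSucc := Fin.ext (by simp [hc])
    rw [he1, Equiv.swap_apply_left,
      Equiv.swap_apply_of_ne_of_ne (by intro he; have := congrArg Fin.val he; simp at this; omega)
        (by intro he; have := congrArg Fin.val he; simp at this; omega)] at hi
    -- hi : w⁻¹ j.succ < w⁻¹ i.castSucc ; hasc: w⁻¹ j.castSucc < w⁻¹ j.succ ; he1 ▸ hni'
    rw [← he1] at hasc
    exact absurd (lt_trans hasc hi) (not_lt.mpr (le_of_lt hni'))
  · -- j < i + 1, j ≠ i, so j + 1 ≤ i ; cases j + 1 = i or j + 1 < i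
    rcases Nat.lt_or_ge ((j : ℕ) + 1) (i : ℕ) with hc2 | hc2
    · -- both fixed
      rw [Equiv.swap_apply_of_ne_of_ne (by intro he; have := congrArg Fin.val he; simp at this; omega)
          (by intro he; have := congrArg Fin.val he; simp at this; omega),
        Equiv.swap_apply_of_ne_of_ne (by intro he; have := congrArg Fin.val he; simp at this; omega)
          (by intro he; have := congrArg Fin.val he; simp at this; omega)] at hi
      exact absurd hi (not_lt.mpr (le_of_lt hni'))
    · -- j + 1 = i : i.castSucc = j.succ
      have hji : (j : ℕ) + 1 = (i : ℕ) := by omega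
      have he1 : i.castSucc = j.succ := Fin.ext (by simp [← hji])
      rw [he1, Equiv.swap_apply_right,
        Equiv.swap_apply_of_ne_of_ne (by intro he; have := congrArg Fin.val he; simp at this; omega)
          (by intro he; have := congrArg Fin.val he; simp at this; omega)] at hi
      rw [← he1] at hasc
      exact absurd (lt_trans hi hasc) (not_lt.mpr (le_of_lt hni'))

lemma lLE_trans {m : ℕ} {x y z : Equiv.Perm (Fin m)} (h1 : lLE x y) (h2 : lLE y z) : lLE x z :=
  Set.Subset.trans h1 h2

lemma lLE_len_eq {m : ℕ} {x y : Equiv.Perm (Fin m)} (h : lLE x y) (hle : len y ≤ len x) :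
    x = y := by
  have hsub := lLE_iff.mp h
  have heq := Finset.eq_of_subset_of_card_le hsub hle
  exact InvL_injective (by rw [← coe_FInvL, ← coe_FInvL, heq])


/-- If two left weak Bruhat intervals `[σ₁,ρ₁]_L` and `[σ₂,ρ₂]_L` are related by a
descent-preserving poset isomorphism (i.e. lie in the same equivalence class `C`),
then `ρ₁σ₁⁻¹ = ρ₂σ₂⁻¹`; so `ξ_C` is well defined. -/
theorem xi_well_defined {n : ℕ}
    (σ₁ ρ₁ σ₂ ρ₂ : Equiv.Perm (Fin (n + 1))) (h₁ : lLE σ₁ ρ₁) (h₂ : lLE σ₂ ρ₂)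
    (f : Equiv.Perm (Fin (n + 1)) → Equiv.Perm (Fin (n + 1)))
    (hbij : Set.BijOn f (lInterval σ₁ ρ₁) (lInterval σ₂ ρ₂))
    (hord : ∀ x ∈ lInterval σ₁ ρ₁, ∀ y ∈ lInterval σ₁ ρ₁, (lLE x y ↔ lLE (f x) (f y)))
    (hdes : ∀ x ∈ lInterval σ₁ ρ₁, DesL (f x) = DesL x) :
    ρ₁ * σ₁⁻¹ = ρ₂ * σ₂⁻¹ := by
  have hσ₁I : σ₁ ∈ lInterval σ₁ ρ₁ := ⟨lLE_refl _, h₁⟩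
  have hρ₁I : ρ₁ ∈ lInterval σ₁ ρ₁ := ⟨h₁, lLE_refl _⟩
  have hσ₂I : σ₂ ∈ lInterval σ₂ ρ₂ := ⟨lLE_refl _, h₂⟩
  have hρ₂I : ρ₂ ∈ lInterval σ₂ ρ₂ := ⟨h₂, lLE_refl _⟩
  have hfσ : f σ₁ = σ₂ := by
    have hmem : f σ₁ ∈ lInterval σ₂ ρ₂ := hbij.mapsTo hσ₁I
    obtain ⟨z, hz, hfz⟩ := hbij.surjOn hσ₂I
    have h3 : lLE (f σ₁) σ₂ := by
      rw [← hfz]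
      exact (hord σ₁ hσ₁I z hz).mp hz.1
    exact lLE_antisymm h3 hmem.1
  have hfρ : f ρ₁ = ρ₂ := by
    have hmem : f ρ₁ ∈ lInterval σ₂ ρ₂ := hbij.mapsTo hρ₁I
    obtain ⟨z, hz, hfz⟩ := hbij.surjOn hρ₂I
    have h3 : lLE ρ₂ (f ρ₁) := by
      rw [← hfz]
      exact (hord z hz ρ₁ hρ₁I).mp hz.2
    exact lLE_antisymm hmem.2 h3
  have main : ∀ k : ℕ, ∀ γ, γ ∈ lInterval σ₁ ρ₁ → len γ ≤ k → f γ = γ * σ₁⁻¹ * σ₂ := by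
    intro k
    induction k with
    | zero =>
      intro γ hγ hlen
      have hγσ : σ₁ = γ := lLE_len_eq hγ.1 (by omega)
      rw [← hγσ, hfσ, mul_inv_cancel, one_mul]
    | succ k ih =>
      intro γ hγ hlen
      by_cases hne : σ₁ = γ
      · rw [← hne, hfσ, mul_inv_cancel, one_mul]
      · obtain ⟨j, hasc, hprod, hσδ, hδγ, hlen'⟩ := down_step hγ.1 hne
        set δ := sgen j * γ with hδ
        have hδI : δ ∈ lInterval σ₁ ρ₁ := ⟨hσδ, lLE_trans hδγ hγ.2⟩
        have hfδ : f δ = δ * σ₁⁻¹ * σ₂ := ih δ hδI (by omega)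
        have hfδI : f δ ∈ lInterval σ₂ ρ₂ := hbij.mapsTo hδI
        have hfγI : f γ ∈ lInterval σ₂ ρ₂ := hbij.mapsTo hγ
        have hδγne : δ ≠ γ := fun he => by rw [he] at hlen'; omega
        have hfle : lLE (f δ) (f γ) := (hord δ hδI γ hγ).mp hδγ
        have hfne : f δ ≠ f γ := fun he => hδγne (hbij.injOn hδI hγ he)
        -- the inversion sets of δ and γ differ by one pair
        obtain ⟨hins, hnot⟩ := InvL_sgen_mul δ j hasc
        rw [hprod] at hins
        -- nothing strictly between f δ and f γ
        have hbetween : ∀ u, lLE (f δ) u → lLE u (f γ) → u = f δ ∨ u = f γ := by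
          intro u hu1 hu2
          have huI : u ∈ lInterval σ₂ ρ₂ := ⟨lLE_trans hfδI.1 hu1, lLE_trans hu2 hfγI.2⟩
          obtain ⟨z, hzI, rfl⟩ := hbij.surjOn huI
          have hz1 : lLE δ z := (hord δ hδI z hzI).mpr hu1
          have hz2 : lLE z γ := (hord z hzI γ hγ).mpr hu2
          by_cases hp : (δ⁻¹ j.castSucc, δ⁻¹ j.succ) ∈ InvL z
          · right
            have : lLE γ z := by
              rw [lLE, hins, Set.insert_subset_iff]
              exact ⟨hp, hz1⟩
            rw [lLE_antisymm hz2 this]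
          · left
            have : lLE z δ := by
              intro w hw
              have hw' := hz2 hw
              rw [hins, Set.mem_insert_iff] at hw'
              rcases hw' with rfl | hw'
              · exact absurd hw hp
              · exact hw'
            rw [lLE_antisymm this hz1]
        -- f γ covers f δ via some generator j'
        obtain ⟨j', hasc', hf1, hf2, hflen⟩ := up_step hfle hfne
        have hfcov : f γ = sgen j' * f δ := by
          rcases hbetween (sgen j' * f δ) hf1 hf2 with he | he
          · exact absurd he (fun hc => by rw [hc] at hflen; omega)
          · exact he.symm
        -- labels agree : j' = j
        have hγinv : ∀ z, γ⁻¹ z = δ⁻¹ (sgen j z) := by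
          intro z
          rw [← hprod, mul_inv_rev]
          show δ⁻¹ ((sgen j)⁻¹ z) = _
          rw [sgen, Equiv.swap_inv]
        have hjγ : j ∈ DesL γ := by
          rw [mem_DesL_iff, hγinv, hγinv]
          show δ⁻¹ ((Equiv.swap j.castSucc j.succ) j.succ) <
            δ⁻¹ ((Equiv.swap j.castSucc j.succ) j.castSucc)
          rw [Equiv.swap_apply_left, Equiv.swap_apply_right]
          exact hasc
        have hjδ : j ∉ DesL δ := by
          rw [mem_DesL_iff]
          exact not_lt.mpr (le_of_lt hasc)
        have hjfγ : j ∈ DesL (sgen j' * f δ) := by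
          rw [← hfcov, hdes γ hγ]
          exact hjγ
        have hjfδ : j ∉ DesL (f δ) := by
          rw [hdes δ hδI]
          exact hjδ
        have hjj : j = j' := label_unique (f δ) j' j hasc' hjfγ hjfδ
        rw [hfcov, ← hjj, hfδ, ← mul_assoc, ← mul_assoc, hδ, ← mul_assoc, sgen,
          Equiv.swap_mul_self, one_mul]
  have hfin := main (len ρ₁) ρ₁ hρ₁I le_rfl
  rw [hfρ] at hfin
  rw [hfin]
  group
end

section
/- Let P be a Schur labeled skew shape poset on {1,…,n}, i.e., P = poset(τ) for some Schur labeling τ of a skew shape. Then P is a regular poset if and only if the canonical Schur labeling τ_P is distinguished. -/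
/-- A skew partition `λ/μ`: a pair of Young diagrams with `μ ⊆ λ`. -/
structure SkewShape where
  outer : YoungDiagram
  inner : YoungDiagram
  le : inner ≤ outer

/-- The cells of the skew diagram `λ/μ` (pairs `(row, column)`). -/
def SkewShape.cells (s : SkewShape) : Finset (ℕ × ℕ) := s.outer.cells \ s.inner.cells

/-- A bijective tableau of shape `λ/μ` of size `n`: a filling of the cells with the
`n` distinct entries of `Fin n`. -/
def IsBijFilling (s : SkewShape) (n : ℕ) (τ : ℕ × ℕ → Fin n) : Prop :=
  Set.BijOn τ ↑s.cells Set.univ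

/-- A standard Young tableau of shape `λ/μ`: a bijective filling whose rows increase
left to right and whose columns increase top to bottom. -/
def IsSYT (s : SkewShape) (n : ℕ) (T : ℕ × ℕ → Fin n) : Prop :=
  IsBijFilling s n T ∧
  (∀ i j, (i, j) ∈ s.cells → (i, j + 1) ∈ s.cells → T (i, j) < T (i, j + 1)) ∧
  (∀ i j, (i, j) ∈ s.cells → (i + 1, j) ∈ s.cells → T (i, j) < T (i + 1, j))

/-- A Schur labeling: a bijective filling whose rows strictly decrease left to right
and whose columns strictly increase top to bottom. -/
def IsSchurLabeling (s : SkewShape) (n : ℕ) (τ : ℕ × ℕ → Fin n) : Prop :=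
  IsBijFilling s n τ ∧
  (∀ i j, (i, j) ∈ s.cells → (i, j + 1) ∈ s.cells → τ (i, j + 1) < τ (i, j)) ∧
  (∀ i j, (i, j) ∈ s.cells → (i + 1, j) ∈ s.cells → τ (i, j) < τ (i + 1, j))

/-- A distinguished Schur labeling: `τ_B ≥ τ_{B'}` whenever `B` is weakly below and
weakly left of `B'`. -/
def IsDistinguished (s : SkewShape) (n : ℕ) (τ : ℕ × ℕ → Fin n) : Prop :=
  IsSchurLabeling s n τ ∧
  ∀ B ∈ s.cells, ∀ B' ∈ s.cells, B'.1 ≤ B.1 → B.2 ≤ B'.2 → τ B' ≤ τ B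

/-- `π = read_τ(T)`, i.e. `π(τ(B)) = T(B)` for every box `B`; since `τ` is a bijective
filling this determines `π` completely. -/
def IsReading (s : SkewShape) {n : ℕ} (τ T : ℕ × ℕ → Fin n) (π : Equiv.Perm (Fin n)) : Prop :=
  ∀ B ∈ s.cells, π (τ B) = T B

/-- The poset `poset(τ)` on labels: `x ≤ y` iff the box of `x` is weakly upper-left of
the box of `y`. -/
def posetRel (s : SkewShape) {n : ℕ} (τ : ℕ × ℕ → Fin n) (x y : Fin n) : Prop :=
  ∃ B ∈ s.cells, ∃ B' ∈ s.cells, τ B = x ∧ τ B' = y ∧ B.1 ≤ B'.1 ∧ B.2 ≤ B'.2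

/-- Two boxes are adjacent (share an edge). -/
def AdjBox (B B' : ℕ × ℕ) : Prop :=
  (B.1 = B'.1 ∧ (B.2 + 1 = B'.2 ∨ B'.2 + 1 = B.2)) ∨
  (B.2 = B'.2 ∧ (B.1 + 1 = B'.1 ∨ B'.1 + 1 = B.1))

/-- Two boxes lie in the same connected component of the skew diagram. -/
def SameComp (s : SkewShape) (B B' : ℕ × ℕ) : Prop :=
  Relation.ReflTransGen (fun x y => x ∈ s.cells ∧ y ∈ s.cells ∧ AdjBox x y) B B'

/-- The skew diagram is basic: it contains no empty rows and no empty columns. -/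
def IsBasic (s : SkewShape) : Prop :=
  (∀ i i' : ℕ, i ≤ i' → (∃ j, (i', j) ∈ s.cells) → ∃ j, (i, j) ∈ s.cells) ∧
  (∀ j j' : ℕ, j ≤ j' → (∃ i, (i, j') ∈ s.cells) → ∃ i, (i, j) ∈ s.cells)

/-- Condition (iii) in the definition of the canonical Schur labeling `τ_P`: the minimal
entries of the connected components, ordered from the top, increase. -/
def CompMinCond (s : SkewShape) {n : ℕ} (τ : ℕ × ℕ → Fin n) : Prop :=
  ∀ B ∈ s.cells, ∀ B' ∈ s.cells, ¬ SameComp s B B' → B.1 < B'.1 →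
    ∃ B₀ ∈ s.cells, SameComp s B B₀ ∧ ∀ B₁ ∈ s.cells, SameComp s B' B₁ → τ B₀ < τ B₁

/-- A binary relation on `{1,…,n}` is regular if for all `x ≤_P z` and `y` between `x`
and `z` as integers, `x ≤_P y` or `y ≤_P z`. -/
def RegularRel {n : ℕ} (r : Fin n → Fin n → Prop) : Prop :=
  ∀ x y z : Fin n, r x z → ((x < y ∧ y < z) ∨ (z < y ∧ y < x)) → r x y ∨ r y z

section RegAux

open Relation

lemma RegAux.mem_cells_iff (s : SkewShape) {p : ℕ × ℕ} :
    p ∈ s.cells ↔ p ∈ s.outer ∧ p ∉ s.inner := by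
  simp [SkewShape.cells, Finset.mem_sdiff, YoungDiagram.mem_cells]

/-- A cell between an upper-left cell and a lower-right cell is a cell. -/
lemma RegAux.sandwich (s : SkewShape) {a b c d i j : ℕ}
    (h1 : (a, b) ∈ s.cells) (h2 : (c, d) ∈ s.cells)
    (hai : a ≤ i) (hbj : b ≤ j) (hic : i ≤ c) (hjd : j ≤ d) : (i, j) ∈ s.cells := by
  rw [RegAux.mem_cells_iff] at *
  exact ⟨s.outer.up_left_mem hic hjd h2.1,
    fun hin => h1.2 (s.inner.up_left_mem hai hbj hin)⟩

lemma RegAux.row_anti {s : SkewShape} {n : ℕ} {τ : ℕ × ℕ → Fin n}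
    (hs : IsSchurLabeling s n τ) :
    ∀ (k c b : ℕ), (c, b) ∈ s.cells → (c, b + k) ∈ s.cells → τ (c, b + k) ≤ τ (c, b) := by
  intro k
  induction k with
  | zero => intro c b _ _; exact le_refl _
  | succ k ih =>
    intro c b h1 h2
    have hm : (c, b + k) ∈ s.cells :=
      RegAux.sandwich s h1 h2 le_rfl (by omega) le_rfl (by omega)
    have hlt : τ (c, b + k + 1) < τ (c, b + k) := hs.2.1 c (b + k) hm h2
    exact le_trans (le_of_lt hlt) (ih c b h1 hm)

lemma RegAux.row_anti' {s : SkewShape} {n : ℕ} {τ : ℕ × ℕ → Fin n}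
    (hs : IsSchurLabeling s n τ) {c b d : ℕ} (hbd : b ≤ d)
    (h1 : (c, b) ∈ s.cells) (h2 : (c, d) ∈ s.cells) : τ (c, d) ≤ τ (c, b) := by
  obtain ⟨k, rfl⟩ := Nat.exists_eq_add_of_le hbd
  exact RegAux.row_anti hs k c b h1 h2

lemma RegAux.col_mono {s : SkewShape} {n : ℕ} {τ : ℕ × ℕ → Fin n}
    (hs : IsSchurLabeling s n τ) :
    ∀ (k c b : ℕ), (c, b) ∈ s.cells → (c + k, b) ∈ s.cells → τ (c, b) ≤ τ (c + k, b) := by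
  intro k
  induction k with
  | zero => intro c b _ _; exact le_refl _
  | succ k ih =>
    intro c b h1 h2
    have hm : (c + k, b) ∈ s.cells :=
      RegAux.sandwich s h1 h2 (by omega) le_rfl (by omega) le_rfl
    have hlt : τ (c + k, b) < τ (c + k + 1, b) := hs.2.2 (c + k) b hm h2
    exact le_trans (ih c b h1 hm) (le_of_lt hlt)

lemma RegAux.col_mono' {s : SkewShape} {n : ℕ} {τ : ℕ × ℕ → Fin n}
    (hs : IsSchurLabeling s n τ) {c a b : ℕ} (hca : c ≤ a)
    (h1 : (c, b) ∈ s.cells) (h2 : (a, b) ∈ s.cells) : τ (c, b) ≤ τ (a, b) := by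
  obtain ⟨k, rfl⟩ := Nat.exists_eq_add_of_le hca
  exact RegAux.col_mono hs k c b h1 h2

lemma RegAux.adj_symm {B B' : ℕ × ℕ} (h : AdjBox B B') : AdjBox B' B := by
  unfold AdjBox at *; tauto

lemma RegAux.sameComp_symm {s : SkewShape} {B B' : ℕ × ℕ}
    (h : SameComp s B B') : SameComp s B' B := by
  exact (@Relation.ReflTransGen.stdSymm _ (fun x y => x ∈ s.cells ∧ y ∈ s.cells ∧ AdjBox x y)
    ⟨fun x y hxy => ⟨hxy.2.1, hxy.1, RegAux.adj_symm hxy.2.2⟩⟩).symm _ _ h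

lemma RegAux.sameRow_aux (s : SkewShape) :
    ∀ (k c b : ℕ), (c, b) ∈ s.cells → (c, b + k) ∈ s.cells →
      SameComp s (c, b) (c, b + k) := by
  intro k
  induction k with
  | zero => intro c b _ _; exact Relation.ReflTransGen.refl
  | succ k ih =>
    intro c b h1 h2
    have hm : (c, b + k) ∈ s.cells :=
      RegAux.sandwich s h1 h2 le_rfl (by omega) le_rfl (by omega)
    exact Relation.ReflTransGen.tail (ih c b h1 hm) ⟨hm, h2, Or.inl ⟨rfl, Or.inl rfl⟩⟩

lemma RegAux.sameRow {s : SkewShape} {c b d : ℕ}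
    (h1 : (c, b) ∈ s.cells) (h2 : (c, d) ∈ s.cells) : SameComp s (c, b) (c, d) := by
  rcases le_total b d with h | h
  · obtain ⟨k, rfl⟩ := Nat.exists_eq_add_of_le h
    exact RegAux.sameRow_aux s k c b h1 h2
  · obtain ⟨k, rfl⟩ := Nat.exists_eq_add_of_le h
    exact RegAux.sameComp_symm (RegAux.sameRow_aux s k c d h2 h1)

lemma RegAux.sameCol_aux (s : SkewShape) :
    ∀ (k c b : ℕ), (c, b) ∈ s.cells → (c + k, b) ∈ s.cells →
      SameComp s (c, b) (c + k, b) := by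
  intro k
  induction k with
  | zero => intro c b _ _; exact Relation.ReflTransGen.refl
  | succ k ih =>
    intro c b h1 h2
    have hm : (c + k, b) ∈ s.cells :=
      RegAux.sandwich s h1 h2 (by omega) le_rfl (by omega) le_rfl
    exact Relation.ReflTransGen.tail (ih c b h1 hm) ⟨hm, h2, Or.inr ⟨rfl, Or.inl rfl⟩⟩

/-- Cells in weakly upper-left relation are in the same connected component. -/
lemma RegAux.sameComp_of_upper_left {s : SkewShape} {i j a b : ℕ}
    (h1 : (i, j) ∈ s.cells) (h2 : (a, b) ∈ s.cells)
    (hia : i ≤ a) (hjb : j ≤ b) : SameComp s (i, j) (a, b) := by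
  have hmid : (a, j) ∈ s.cells := RegAux.sandwich s h1 h2 hia le_rfl le_rfl hjb
  obtain ⟨k, rfl⟩ := Nat.exists_eq_add_of_le hia
  exact Relation.ReflTransGen.trans (RegAux.sameCol_aux s k i j h1 hmid)
    (RegAux.sameRow hmid h2)

/-- Along a connected component, every pair of consecutive rows between the rows of
two of its cells overlaps. -/
lemma RegAux.overlap_of_sameComp {s : SkewShape} {C D : ℕ × ℕ} (h : SameComp s C D) :
    ∀ r, D.1 ≤ r → r < C.1 → ∃ q, (r, q) ∈ s.cells ∧ (r + 1, q) ∈ s.cells := by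
  induction h with
  | refl => intro r h1 h2; omega
  | @tail E D' hCE hstep ih =>
    intro r h1 h2
    by_cases hE : E.1 ≤ r
    · exact ih r hE h2
    · push_neg at hE
      rcases hstep.2.2 with ⟨hr, _⟩ | ⟨hc, hr | hr⟩
      · omega
      · omega
      · -- E.1 = D'.1 + 1, and D'.1 ≤ r < E.1 forces r = D'.1
        have hrD : r = D'.1 := by omega
        refine ⟨D'.2, ?_, ?_⟩
        · rw [hrD]; exact hstep.2.1
        · rw [hrD, hr, ← hc]; exact hstep.1

/-- If all consecutive rows between overlap, two cells are in the same component. -/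
lemma RegAux.sameComp_of_overlaps (s : SkewShape) :
    ∀ (k c b d : ℕ), (c + k, b) ∈ s.cells → (c, d) ∈ s.cells →
      (∀ r, c ≤ r → r < c + k → ∃ q, (r, q) ∈ s.cells ∧ (r + 1, q) ∈ s.cells) →
      SameComp s (c + k, b) (c, d) := by
  intro k
  induction k with
  | zero => intro c b d h1 h2 _; exact RegAux.sameRow h1 h2
  | succ k ih =>
    intro c b d h1 h2 hov
    obtain ⟨q, hq1, hq2⟩ := hov (c + k) (by omega) (by omega)
    have hrow : SameComp s (c + k + 1, b) (c + k + 1, q) := RegAux.sameRow h1 hq2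
    have hstep : SameComp s (c + k + 1, q) (c + k, q) :=
      Relation.ReflTransGen.single ⟨hq2, hq1, Or.inr ⟨rfl, Or.inr rfl⟩⟩
    have htail : SameComp s (c + k, q) (c, d) :=
      ih c q d hq1 h2 (fun r hr1 hr2 => hov r hr1 (by omega))
    exact hrow.trans (hstep.trans htail)

/-- Distinguishedness is automatic within a connected component. -/
lemma RegAux.sameComp_dist {s : SkewShape} {n : ℕ} {τ : ℕ × ℕ → Fin n}
    (hs : IsSchurLabeling s n τ) :
    ∀ (k a b c d : ℕ), (a, b) ∈ s.cells → (c, d) ∈ s.cells →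
      SameComp s (a, b) (c, d) → c ≤ a → b ≤ d → a ≤ c + k → τ (c, d) ≤ τ (a, b) := by
  intro k
  induction k with
  | zero =>
    intro a b c d h1 h2 _ hca hbd hak
    have hac : a = c := by omega
    subst hac
    exact RegAux.row_anti' hs hbd h1 h2
  | succ k ih =>
    intro a b c d h1 h2 hcomp hca hbd hak
    by_cases hac : a = c
    · subst hac; exact RegAux.row_anti' hs hbd h1 h2
    · have hca' : c < a := by omega
      by_cases hcb : (c, b) ∈ s.cells
      · exact le_trans (RegAux.row_anti' hs hbd hcb h2) (RegAux.col_mono' hs hca hcb h1)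
        -- note: col_mono' hs hca hcb h1
      · obtain ⟨q, hq1, hq2⟩ := RegAux.overlap_of_sameComp hcomp c le_rfl hca'
        have hbq : b < q := by
          by_contra hle
          push_neg at hle
          exact hcb (RegAux.sandwich s hq1 h2 le_rfl hle le_rfl hbd)
        by_cases hqd : q ≤ d
        · have e1 : τ (c, d) ≤ τ (c, q) := RegAux.row_anti' hs hqd hq1 h2
          have e2 : τ (c, q) < τ (c + 1, q) := hs.2.2 c q hq1 hq2
          have hcomp' : SameComp s (a, b) (c + 1, q) :=
            hcomp.trans ((RegAux.sameRow h2 hq1).trans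
              (Relation.ReflTransGen.single ⟨hq1, hq2, Or.inr ⟨rfl, Or.inl rfl⟩⟩))
          have e3 := ih a b (c + 1) q h1 hq2 hcomp' hca' (le_of_lt hbq) (by omega)
          exact le_trans e1 (le_trans (le_of_lt e2) e3)
        · push_neg at hqd
          have hcd1 : (c + 1, d) ∈ s.cells :=
            RegAux.sandwich s h2 hq2 (by omega) le_rfl le_rfl (le_of_lt hqd)
          have e2 : τ (c, d) < τ (c + 1, d) := hs.2.2 c d h2 hcd1
          have hcomp' : SameComp s (a, b) (c + 1, d) :=
            hcomp.trans (Relation.ReflTransGen.single ⟨h2, hcd1, Or.inr ⟨rfl, Or.inl rfl⟩⟩)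
          have e3 := ih a b (c + 1) d h1 hcd1 hcomp' hca' hbd (by omega)
          exact le_trans (le_of_lt e2) e3

/-- Intermediate value: along a path from a big label to a small label, some adjacent
pair straddles `x`. -/
lemma RegAux.ivt {s : SkewShape} {n : ℕ} {τ : ℕ × ℕ → Fin n} {C D : ℕ × ℕ}
    (h : SameComp s C D) :
    ∀ x : Fin n, τ D < x → x ≤ τ C →
      ∃ U V : ℕ × ℕ, U ∈ s.cells ∧ V ∈ s.cells ∧ AdjBox U V ∧
        SameComp s C U ∧ SameComp s C V ∧ τ V < x ∧ x ≤ τ U := by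
  induction h with
  | refl => intro x h1 h2; exact absurd h2 (not_le.mpr h1)
  | @tail E D' hCE hstep ih =>
    intro x h1 h2
    by_cases hE : τ E < x
    · exact ih x hE h2
    · push_neg at hE
      exact ⟨E, D', hstep.1, hstep.2.1, hstep.2.2, hCE,
        Relation.ReflTransGen.tail hCE hstep, h1, hE⟩

lemma RegAux.adj_comparable {s : SkewShape} {n : ℕ} {τ : ℕ × ℕ → Fin n} {U V : ℕ × ℕ}
    (hU : U ∈ s.cells) (hV : V ∈ s.cells) (h : AdjBox U V) :
    posetRel s τ (τ U) (τ V) ∨ posetRel s τ (τ V) (τ U) := by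
  rcases h with ⟨h1, h2 | h2⟩ | ⟨h1, h2 | h2⟩
  · exact Or.inl ⟨U, hU, V, hV, rfl, rfl, le_of_eq h1, by omega⟩
  · exact Or.inr ⟨V, hV, U, hU, rfl, rfl, le_of_eq h1.symm, by omega⟩
  · exact Or.inl ⟨U, hU, V, hV, rfl, rfl, by omega, le_of_eq h1⟩
  · exact Or.inr ⟨V, hV, U, hU, rfl, rfl, by omega, le_of_eq h1.symm⟩

lemma RegAux.rel_elim {s : SkewShape} {n : ℕ} {τ : ℕ × ℕ → Fin n}
    (hs : IsSchurLabeling s n τ) {x y : Fin n} (h : posetRel s τ x y)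
    {Bx By : ℕ × ℕ} (hBx : Bx ∈ s.cells) (hBy : By ∈ s.cells)
    (hx : τ Bx = x) (hy : τ By = y) : Bx.1 ≤ By.1 ∧ Bx.2 ≤ By.2 := by
  obtain ⟨B, hB, B', hB', hBxe, hBye, h1, h2⟩ := h
  have e1 : B = Bx := hs.1.injOn (Finset.mem_coe.mpr hB) (Finset.mem_coe.mpr hBx)
    (by rw [hBxe, hx])
  have e2 : B' = By := hs.1.injOn (Finset.mem_coe.mpr hB') (Finset.mem_coe.mpr hBy)
    (by rw [hBye, hy])
  subst e1; subst e2
  exact ⟨h1, h2⟩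

end RegAux

/-- For a Schur labeled skew shape poset `P = poset(τ_P)` (with `τ_P` the canonical
Schur labeling: basic shape and increasing component minima), `P` is regular if and only
if `τ_P` is distinguished. -/
theorem regular_iff_distinguished (s : SkewShape) (n : ℕ) (τ : ℕ × ℕ → Fin n)
    (hschur : IsSchurLabeling s n τ) (hbasic : IsBasic s) (hmin : CompMinCond s τ) :
    RegularRel (posetRel s τ) ↔
      (∀ B ∈ s.cells, ∀ B' ∈ s.cells, B'.1 ≤ B.1 → B.2 ≤ B'.2 → τ B' ≤ τ B) := by
  constructor
  · -- regular → distinguished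
    intro hreg B hB B' hB' h1 h2
    obtain ⟨a, b⟩ := B
    obtain ⟨c, d⟩ := B'
    have hca : c ≤ a := h1
    have hbd : b ≤ d := h2
    by_cases hsc : SameComp s (a, b) (c, d)
    · exact RegAux.sameComp_dist hschur a a b c d hB hB' hsc hca hbd (by omega)
    · by_contra hle
      push_neg at hle
      have hrow : c < a := by
        rcases eq_or_lt_of_le hca with h | h
        · exfalso
          apply hsc
          have hB'' : (a, d) ∈ s.cells := by rw [← h]; exact hB'
          have hsr := RegAux.sameRow hB hB''
          rw [h]
          exact hsr
        · exact h
      have hsc' : ¬ SameComp s (c, d) (a, b) := fun hcc => hsc (RegAux.sameComp_symm hcc)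
      obtain ⟨B₀, hB₀, hcomp₀, hmin₀⟩ := hmin (c, d) hB' (a, b) hB hsc' hrow
      have hm : τ B₀ < τ (a, b) := hmin₀ (a, b) hB Relation.ReflTransGen.refl
      obtain ⟨U, V, hU, hV, hadj, hCU, hCV, hVx, hUx⟩ :=
        RegAux.ivt hcomp₀ (τ (a, b)) hm (le_of_lt hle)
      have hUne : U ≠ (a, b) := by
        rintro rfl
        exact hsc (RegAux.sameComp_symm hCU)
      have hUgt : τ (a, b) < τ U := by
        rcases lt_or_eq_of_le hUx with hh | hh
        · exact hh
        · exact absurd (Set.BijOn.injOn hschur.1 (Finset.mem_coe.mpr hU)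
            (Finset.mem_coe.mpr hB) hh.symm) hUne
      have nocomp : ∀ W : ℕ × ℕ, W ∈ s.cells → SameComp s (c, d) W →
          ¬ posetRel s τ (τ W) (τ (a, b)) ∧ ¬ posetRel s τ (τ (a, b)) (τ W) := by
        intro W hW hCW
        constructor
        · intro hrel
          obtain ⟨g1, g2⟩ := RegAux.rel_elim hschur hrel hW hB rfl rfl
          have hWab : SameComp s W (a, b) :=
            RegAux.sameComp_of_upper_left (i := W.1) (j := W.2) hW hB g1 g2
          exact hsc' (hCW.trans hWab)
        · intro hrel
          obtain ⟨g1, g2⟩ := RegAux.rel_elim hschur hrel hB hW rfl rfl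
          have habW : SameComp s (a, b) W :=
            RegAux.sameComp_of_upper_left (i := a) (j := b) (a := W.1) (b := W.2) hB hW g1 g2
          exact hsc (habW.trans (RegAux.sameComp_symm hCW))
      rcases RegAux.adj_comparable hU hV hadj with hr | hr
      · rcases hreg (τ U) (τ (a, b)) (τ V) hr (Or.inr ⟨hVx, hUgt⟩) with hh | hh
        · exact (nocomp U hU hCU).1 hh
        · exact (nocomp V hV hCV).2 hh
      · rcases hreg (τ V) (τ (a, b)) (τ U) hr (Or.inl ⟨hVx, hUgt⟩) with hh | hh
        · exact (nocomp V hV hCV).1 hh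
        · exact (nocomp U hU hCU).2 hh
  · -- distinguished → regular
    intro hdist x y z hxz hmid
    obtain ⟨Bx, hBx, Bz, hBz, hτx, hτz, hr1, hr2⟩ := hxz
    obtain ⟨By, hBy, hτy⟩ := Set.BijOn.surjOn hschur.1 (Set.mem_univ y)
    have hBy' : By ∈ s.cells := Finset.mem_coe.mp hBy
    by_cases hxy : Bx.1 ≤ By.1 ∧ Bx.2 ≤ By.2
    · exact Or.inl ⟨Bx, hBx, By, hBy', hτx, hτy, hxy.1, hxy.2⟩
    · by_cases hyz : By.1 ≤ Bz.1 ∧ By.2 ≤ Bz.2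
      · exact Or.inr ⟨By, hBy', Bz, hBz, hτy, hτz, hyz.1, hyz.2⟩
      · exfalso
        rw [not_and_or, not_le, not_le] at hxy hyz
        rcases hmid with ⟨hxy', hyz'⟩ | ⟨hzy', hyx'⟩ <;>
          rcases hxy with g1 | g1 <;> rcases hyz with g2 | g2
        · omega
        · exact absurd (hdist Bx hBx By hBy' (le_of_lt g1) (by omega))
            (by rw [hτx, hτy]; exact not_le.mpr hxy')
        · exact absurd (hdist By hBy' Bz hBz (le_of_lt g2) (by omega))
            (by rw [hτy, hτz]; exact not_le.mpr hyz')
        · omega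
        · omega
        · exact absurd (hdist Bz hBz By hBy' (by omega) (le_of_lt g2))
            (by rw [hτz, hτy]; exact not_le.mpr hzy')
        · exact absurd (hdist By hBy' Bx hBx (by omega) (le_of_lt g1))
            (by rw [hτy, hτx]; exact not_le.mpr hyx')
        · omega
end
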